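/- Let Ω : U → ℝ be a smooth function on an open set U ⊆ ℝ⁴ with coordinates (w, z, w̃, z̃) satisfying the first heavenly equation Ω_{wz̃}·Ω_{zw̃} − Ω_{ww̃}·Ω_{zz̃} = 1 at every point of U. Then for every λ ∈ ℝ, the smooth vector fields L₀ = Ω_{ww̃}∂_{z̃} − Ω_{wz̃}∂_{w̃} − λ∂_w and L₁ = Ω_{zw̃}∂_{z̃} − Ω_{zz̃}∂_{w̃} − λ∂_z on U have vanishing Lie bracket: [L₀, L₁] = 0 at every point of U. -/

import Mathlib

noncomputable section

/-- ℝ⁴ with coordinates (w, z, w̃, z̃) indexed by 0, 1, 2, 3. -/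
abbrev R4 : Type := Fin 4 → ℝ

/-- Partial derivative of a function on ℝ⁴ in the i-th coordinate direction. -/
def pd (i : Fin 4) (f : R4 → ℝ) : R4 → ℝ := fun p => fderiv ℝ f p (Pi.single i 1 : R4)

/-- Lie bracket of vector fields on ℝ⁴: [X, Y](p) = DY(p)·X(p) − DX(p)·Y(p). -/
def lieBracket (X Y : R4 → R4) : R4 → R4 := fun p => fderiv ℝ Y p (X p) - fderiv ℝ X p (Y p)

/-- If Ω satisfies the first heavenly equation
Ω_{wz̃}Ω_{zw̃} − Ω_{ww̃}Ω_{zz̃} = 1 on an open set U, then for every λ ∈ ℝ the vector fields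
L₀ = Ω_{ww̃}∂_{z̃} − Ω_{wz̃}∂_{w̃} − λ∂_w and L₁ = Ω_{zw̃}∂_{z̃} − Ω_{zz̃}∂_{w̃} − λ∂_z
have vanishing Lie bracket on U. -/
/- Auxiliary lemmas -/

lemma diffAt_of_contDiffOn {F : Type*} [NormedAddCommGroup F] [NormedSpace ℝ F]
    {U : Set R4} (hU : IsOpen U) {f : R4 → F}
    (hf : ContDiffOn ℝ (⊤ : ℕ∞) f U) {p : R4} (hp : p ∈ U) :
    DifferentiableAt ℝ f p :=
  (hf.contDiffAt (hU.mem_nhds hp)).differentiableAt (by decide)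

lemma pd_contDiffOn {U : Set R4} (hU : IsOpen U) {f : R4 → ℝ}
    (hf : ContDiffOn ℝ (⊤ : ℕ∞) f U) (i : Fin 4) : ContDiffOn ℝ (⊤ : ℕ∞) (pd i f) U :=
  (hf.fderiv_of_isOpen hU (by decide)).clm_apply contDiffOn_const

lemma pd_comm {U : Set R4} (hU : IsOpen U) {f : R4 → ℝ}
    (hf : ContDiffOn ℝ (⊤ : ℕ∞) f U) {p : R4} (hp : p ∈ U) (i j : Fin 4) :
    pd i (pd j f) p = pd j (pd i f) p := by
  have hc : ContDiffAt ℝ (⊤ : ℕ∞) f p := hf.contDiffAt (hU.mem_nhds hp)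
  have hsym : IsSymmSndFDerivAt ℝ f p := hc.isSymmSndFDerivAt (by rw [minSmoothness_of_isRCLikeNormedField]; exact WithTop.coe_le_coe.2 (le_top : (2 : ℕ∞) ≤ ⊤))
  have hdf : DifferentiableAt ℝ (fderiv ℝ f) p :=
    diffAt_of_contDiffOn hU (hf.fderiv_of_isOpen hU (by decide)) hp
  have key : ∀ k l : Fin 4, pd k (pd l f) p
      = fderiv ℝ (fderiv ℝ f) p (Pi.single k 1) (Pi.single l 1) := by
    intro k l
    have h1 : HasFDerivAt (fun q => fderiv ℝ f q (Pi.single l 1 : R4))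
        ((ContinuousLinearMap.apply ℝ ℝ (Pi.single l 1 : R4)).comp
          (fderiv ℝ (fderiv ℝ f) p)) p :=
      (ContinuousLinearMap.apply ℝ ℝ (Pi.single l 1 : R4)).hasFDerivAt.comp p hdf.hasFDerivAt
    show fderiv ℝ (fun q => fderiv ℝ f q (Pi.single l 1 : R4)) p (Pi.single k 1) = _
    rw [h1.fderiv]
    simp
  rw [key, key]; exact hsym _ _

lemma pd_congr_nhds {f g : R4 → ℝ} {p : R4} (h : f =ᶠ[nhds p] g) (i : Fin 4) :
    pd i f p = pd i g p := by
  unfold pd; rw [h.fderiv_eq]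

lemma fderiv_comb (g : R4 → ℝ) (p : R4) (x y z : ℝ) (i j k : Fin 4) :
    fderiv ℝ g p (x • (Pi.single i 1 : R4) - y • (Pi.single j 1 : R4)
        - z • (Pi.single k 1 : R4))
      = x * pd i g p - y * pd j g p - z * pd k g p := by
  simp [pd, smul_eq_mul]

theorem heavenly_lax_commutes (U : Set R4) (hU : IsOpen U) (Ω : R4 → ℝ)
    (hΩ : ContDiffOn ℝ (⊤ : ℕ∞) Ω U)
    (heav : ∀ p ∈ U,
      pd 0 (pd 3 Ω) p * pd 1 (pd 2 Ω) p - pd 0 (pd 2 Ω) p * pd 1 (pd 3 Ω) p = 1)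
    (lam : ℝ) :
    ∀ p ∈ U, lieBracket
      (fun q => pd 0 (pd 2 Ω) q • (Pi.single 3 1 : R4) - pd 0 (pd 3 Ω) q • (Pi.single 2 1 : R4)
                - lam • (Pi.single 0 1 : R4))
      (fun q => pd 1 (pd 2 Ω) q • (Pi.single 3 1 : R4) - pd 1 (pd 3 Ω) q • (Pi.single 2 1 : R4)
                - lam • (Pi.single 1 1 : R4))
      p = 0 := by
  intro p hp
  have hpn : U ∈ nhds p := hU.mem_nhds hp
  have hΩ2 : ContDiffOn ℝ (⊤ : ℕ∞) (pd 2 Ω) U := pd_contDiffOn hU hΩ 2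
  have hΩ3 : ContDiffOn ℝ (⊤ : ℕ∞) (pd 3 Ω) U := pd_contDiffOn hU hΩ 3
  have hA : ContDiffOn ℝ (⊤ : ℕ∞) (pd 0 (pd 2 Ω)) U := pd_contDiffOn hU hΩ2 0
  have hB : ContDiffOn ℝ (⊤ : ℕ∞) (pd 0 (pd 3 Ω)) U := pd_contDiffOn hU hΩ3 0
  have hC : ContDiffOn ℝ (⊤ : ℕ∞) (pd 1 (pd 2 Ω)) U := pd_contDiffOn hU hΩ2 1
  have hD : ContDiffOn ℝ (⊤ : ℕ∞) (pd 1 (pd 3 Ω)) U := pd_contDiffOn hU hΩ3 1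
  have hAp : DifferentiableAt ℝ (pd 0 (pd 2 Ω)) p := diffAt_of_contDiffOn hU hA hp
  have hBp : DifferentiableAt ℝ (pd 0 (pd 3 Ω)) p := diffAt_of_contDiffOn hU hB hp
  have hCp : DifferentiableAt ℝ (pd 1 (pd 2 Ω)) p := diffAt_of_contDiffOn hU hC hp
  have hDp : DifferentiableAt ℝ (pd 1 (pd 3 Ω)) p := diffAt_of_contDiffOn hU hD hp
  -- Schwarz symmetry facts
  have s1 : pd 0 (pd 1 (pd 2 Ω)) p = pd 1 (pd 0 (pd 2 Ω)) p := pd_comm hU hΩ2 hp 0 1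
  have s2 : pd 0 (pd 1 (pd 3 Ω)) p = pd 1 (pd 0 (pd 3 Ω)) p := pd_comm hU hΩ3 hp 0 1
  have hswap : (fun q => pd 3 (pd 2 Ω) q) =ᶠ[nhds p] fun q => pd 2 (pd 3 Ω) q := by
    filter_upwards [hpn] with q hq
    exact pd_comm hU hΩ hq 3 2
  have s3 : pd 3 (pd 0 (pd 2 Ω)) p = pd 2 (pd 0 (pd 3 Ω)) p := by
    calc pd 3 (pd 0 (pd 2 Ω)) p = pd 0 (pd 3 (pd 2 Ω)) p := pd_comm hU hΩ2 hp 3 0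
    _ = pd 0 (pd 2 (pd 3 Ω)) p := pd_congr_nhds hswap 0
    _ = pd 2 (pd 0 (pd 3 Ω)) p := pd_comm hU hΩ3 hp 0 2
  have s4 : pd 3 (pd 1 (pd 2 Ω)) p = pd 2 (pd 1 (pd 3 Ω)) p := by
    calc pd 3 (pd 1 (pd 2 Ω)) p = pd 1 (pd 3 (pd 2 Ω)) p := pd_comm hU hΩ2 hp 3 1
    _ = pd 1 (pd 2 (pd 3 Ω)) p := pd_congr_nhds hswap 1
    _ = pd 2 (pd 1 (pd 3 Ω)) p := pd_comm hU hΩ3 hp 1 2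
  -- differentiated heavenly equation
  have hF : HasFDerivAt
      (fun q => pd 0 (pd 3 Ω) q * pd 1 (pd 2 Ω) q - pd 0 (pd 2 Ω) q * pd 1 (pd 3 Ω) q)
      (pd 0 (pd 3 Ω) p • fderiv ℝ (pd 1 (pd 2 Ω)) p + pd 1 (pd 2 Ω) p • fderiv ℝ (pd 0 (pd 3 Ω)) p
       - (pd 0 (pd 2 Ω) p • fderiv ℝ (pd 1 (pd 3 Ω)) p
          + pd 1 (pd 3 Ω) p • fderiv ℝ (pd 0 (pd 2 Ω)) p)) p :=
    (hBp.hasFDerivAt.mul hCp.hasFDerivAt).sub (hAp.hasFDerivAt.mul hDp.hasFDerivAt)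
  have hFe : (fun q => pd 0 (pd 3 Ω) q * pd 1 (pd 2 Ω) q - pd 0 (pd 2 Ω) q * pd 1 (pd 3 Ω) q)
      =ᶠ[nhds p] fun _ => (1 : ℝ) := by
    filter_upwards [hpn] with q hq
    exact heav q hq
  have hz : pd 0 (pd 3 Ω) p • fderiv ℝ (pd 1 (pd 2 Ω)) p + pd 1 (pd 2 Ω) p • fderiv ℝ (pd 0 (pd 3 Ω)) p
       - (pd 0 (pd 2 Ω) p • fderiv ℝ (pd 1 (pd 3 Ω)) p
          + pd 1 (pd 3 Ω) p • fderiv ℝ (pd 0 (pd 2 Ω)) p) = 0 := by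
    rw [← hF.fderiv, hFe.fderiv_eq]
    exact fderiv_const_apply 1
  have heav_pd : ∀ i : Fin 4,
      pd 0 (pd 3 Ω) p * pd i (pd 1 (pd 2 Ω)) p + pd 1 (pd 2 Ω) p * pd i (pd 0 (pd 3 Ω)) p
       - (pd 0 (pd 2 Ω) p * pd i (pd 1 (pd 3 Ω)) p
          + pd 1 (pd 3 Ω) p * pd i (pd 0 (pd 2 Ω)) p) = 0 := by
    intro i
    have := congrArg (fun L : R4 →L[ℝ] ℝ => L (Pi.single i 1)) hz
    simpa [pd, smul_eq_mul] using this
  have h2 := heav_pd 2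
  have h3 := heav_pd 3
  -- derivatives of the two vector fields
  have hL0 : HasFDerivAt
      (fun q => pd 0 (pd 2 Ω) q • (Pi.single 3 1 : R4) - pd 0 (pd 3 Ω) q • (Pi.single 2 1 : R4)
                - lam • (Pi.single 0 1 : R4))
      ((fderiv ℝ (pd 0 (pd 2 Ω)) p).smulRight (Pi.single 3 1 : R4)
        - (fderiv ℝ (pd 0 (pd 3 Ω)) p).smulRight (Pi.single 2 1 : R4)) p :=
    ((hAp.hasFDerivAt.smul_const _).sub (hBp.hasFDerivAt.smul_const _)).sub_const _
  have hL1 : HasFDerivAt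
      (fun q => pd 1 (pd 2 Ω) q • (Pi.single 3 1 : R4) - pd 1 (pd 3 Ω) q • (Pi.single 2 1 : R4)
                - lam • (Pi.single 1 1 : R4))
      ((fderiv ℝ (pd 1 (pd 2 Ω)) p).smulRight (Pi.single 3 1 : R4)
        - (fderiv ℝ (pd 1 (pd 3 Ω)) p).smulRight (Pi.single 2 1 : R4)) p :=
    ((hCp.hasFDerivAt.smul_const _).sub (hDp.hasFDerivAt.smul_const _)).sub_const _
  unfold lieBracket
  rw [hL0.fderiv, hL1.fderiv]
  simp only [ContinuousLinearMap.coe_sub', Pi.sub_apply, ContinuousLinearMap.smulRight_apply]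
  have hX : fderiv ℝ (pd 1 (pd 2 Ω)) p
        (pd 0 (pd 2 Ω) p • (Pi.single 3 1 : R4) - pd 0 (pd 3 Ω) p • (Pi.single 2 1 : R4)
          - lam • (Pi.single 0 1 : R4))
      = fderiv ℝ (pd 0 (pd 2 Ω)) p
        (pd 1 (pd 2 Ω) p • (Pi.single 3 1 : R4) - pd 1 (pd 3 Ω) p • (Pi.single 2 1 : R4)
          - lam • (Pi.single 1 1 : R4)) := by
    rw [fderiv_comb, fderiv_comb, s1, s4, s3]
    nlinarith [h2]
  have hY : fderiv ℝ (pd 1 (pd 3 Ω)) p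
        (pd 0 (pd 2 Ω) p • (Pi.single 3 1 : R4) - pd 0 (pd 3 Ω) p • (Pi.single 2 1 : R4)
          - lam • (Pi.single 0 1 : R4))
      = fderiv ℝ (pd 0 (pd 3 Ω)) p
        (pd 1 (pd 2 Ω) p • (Pi.single 3 1 : R4) - pd 1 (pd 3 Ω) p • (Pi.single 2 1 : R4)
          - lam • (Pi.single 1 1 : R4)) := by
    rw [fderiv_comb, fderiv_comb, s2, ← s4, ← s3]
    nlinarith [h3]
  rw [hX, hY]
  abel


end
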